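/- The group G = ⟨s₂, s₃ | s₂⁵ = 1, s₃² = 1, (s₃s₂)⁴ = 1⟩ is infinite. -/

import Mathlib

noncomputable section

namespace Stmt12Aux

open Matrix

abbrev U := (Matrix (Fin 2) (Fin 2) ℝ)ˣ

def s5 : ℝ := Real.sqrt 5
def s2r : ℝ := Real.sqrt 2
def u : ℝ := Real.sqrt ((s5 - 1) / 2)
def a : ℝ := (1 + s5) / 4
def b : ℝ := (s2r + u) / 2
def c : ℝ := (s2r - u) / 2

lemma h5 : s5 ^ 2 = 5 := Real.sq_sqrt (by norm_num)
lemma h2 : s2r ^ 2 = 2 := Real.sq_sqrt (by norm_num)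
lemma s5_nonneg : 0 ≤ s5 := Real.sqrt_nonneg _
lemma s2r_nonneg : 0 ≤ s2r := Real.sqrt_nonneg _
lemma u_nonneg : 0 ≤ u := Real.sqrt_nonneg _
lemma s5_gt : 2 < s5 := by nlinarith [h5, s5_nonneg]
lemma s2r_gt : 1.3 < s2r := by nlinarith [h2, s2r_nonneg]
lemma hu : u ^ 2 = (s5 - 1) / 2 := Real.sq_sqrt (by nlinarith [s5_gt])

def Xm : Matrix (Fin 2) (Fin 2) ℝ := !![a, b; -c, a]
def Xinv : Matrix (Fin 2) (Fin 2) ℝ := !![a, -b; c, a]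
def Ym : Matrix (Fin 2) (Fin 2) ℝ := !![0, -1; 1, 0]

lemma hX5 : Xm * Xm * Xm * Xm * Xm = -1 := by
  have h5 := h5; have h2 := h2; have hu := hu
  ext i j
  fin_cases i <;> fin_cases j
  · simp [Xm, a, b, c, Matrix.mul_apply, Fin.sum_univ_two, Matrix.one_apply]
    linear_combination ((1/1024)*s5^3 + (5/1024)*s5^2 + (-5/128)*s5*s2r^2 + (5/128)*s5*u^2 + (15/1024)*s5 + (-15/128)*s2r^2 + (5/32)*u^2 + (35/1024)) * h5 + ((5/64)*s5*s2r^2 + (-5/32)*s5*u^2 + (-5/32)*s5 + (5/64)*s2r^2 + (-5/32)*u^2 + (-15/32)) * h2 + ((5/64)*s5*u^2 + (5/64)*u^2 + (15/32)) * hu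
  · simp [Xm, a, b, c, Matrix.mul_apply, Fin.sum_univ_two, Matrix.one_apply]
    linear_combination ((5/512)*s5^2*s2r + (5/512)*s5^2*u + (5/128)*s5*s2r + (5/128)*s5*u + (-5/64)*s2r^3 + (-5/64)*s2r^2*u + (5/64)*s2r*u^2 + (99/512)*s2r + (5/64)*u^3 + (99/512)*u) * h5 + ((-5/32)*s5*s2r + (-5/32)*s5*u + (1/32)*s2r^3 + (1/32)*s2r^2*u + (-1/16)*s2r*u^2 + (-13/32)*s2r + (-1/16)*u^3 + (-13/32)*u) * h2 + ((11/64)*s5*s2r + (11/64)*s5*u + (1/32)*s2r*u^2 + (21/64)*s2r + (1/32)*u^3 + (21/64)*u) * hu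
  · simp [Xm, a, b, c, Matrix.mul_apply, Fin.sum_univ_two, Matrix.one_apply]
    linear_combination ((-5/512)*s5^2*s2r + (5/512)*s5^2*u + (-5/128)*s5*s2r + (5/128)*s5*u + (5/64)*s2r^3 + (-5/64)*s2r^2*u + (-5/64)*s2r*u^2 + (-99/512)*s2r + (5/64)*u^3 + (99/512)*u) * h5 + ((5/32)*s5*s2r + (-5/32)*s5*u + (-1/32)*s2r^3 + (1/32)*s2r^2*u + (1/16)*s2r*u^2 + (13/32)*s2r + (-1/16)*u^3 + (-13/32)*u) * h2 + ((-11/64)*s5*s2r + (11/64)*s5*u + (-1/32)*s2r*u^2 + (-21/64)*s2r + (1/32)*u^3 + (21/64)*u) * hu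
  · simp [Xm, a, b, c, Matrix.mul_apply, Fin.sum_univ_two, Matrix.one_apply]
    linear_combination ((1/1024)*s5^3 + (5/1024)*s5^2 + (-5/128)*s5*s2r^2 + (5/128)*s5*u^2 + (15/1024)*s5 + (-15/128)*s2r^2 + (5/32)*u^2 + (35/1024)) * h5 + ((5/64)*s5*s2r^2 + (-5/32)*s5*u^2 + (-5/32)*s5 + (5/64)*s2r^2 + (-5/32)*u^2 + (-15/32)) * h2 + ((5/64)*s5*u^2 + (5/64)*u^2 + (15/32)) * hu

lemma hZ4 : (Ym * Xm) * (Ym * Xm) * (Ym * Xm) * (Ym * Xm) = -1 := by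
  have h5 := h5; have h2 := h2; have hu := hu
  ext i j
  fin_cases i <;> fin_cases j
  · simp [Xm, Ym, a, b, c, Matrix.mul_apply, Fin.sum_univ_two, Matrix.one_apply]
    linear_combination ((1/256)*s5^2 + (1/64)*s5 + (-3/32)*s2r^2 + (1/16)*s2r*u + (-1/32)*u^2 + (7/256)) * h5 + ((-3/16)*s5 + (1/16)*s2r^2 + (-1/4)*s2r*u + (3/8)*u^2 + (-7/16)) * h2 + ((-1/32)*s5 + (-1/4)*s2r*u + (1/16)*u^2 + (17/32)) * hu
  · simp [Xm, Ym, a, b, c, Matrix.mul_apply, Fin.sum_univ_two, Matrix.one_apply]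
    linear_combination ((1/32)*s5*s2r + (1/32)*s2r) * h5 + ((-1/8)*s5*s2r + (-1/8)*s2r) * h2 + ((-1/8)*s5*s2r + (-1/8)*s2r) * hu
  · simp [Xm, Ym, a, b, c, Matrix.mul_apply, Fin.sum_univ_two, Matrix.one_apply]
    linear_combination ((-1/32)*s5*s2r + (-1/32)*s2r) * h5 + ((1/8)*s5*s2r + (1/8)*s2r) * h2 + ((1/8)*s5*s2r + (1/8)*s2r) * hu
  · simp [Xm, Ym, a, b, c, Matrix.mul_apply, Fin.sum_univ_two, Matrix.one_apply]
    linear_combination ((1/256)*s5^2 + (1/64)*s5 + (-3/32)*s2r^2 + (-1/16)*s2r*u + (-1/32)*u^2 + (7/256)) * h5 + ((-3/16)*s5 + (1/16)*s2r^2 + (1/4)*s2r*u + (3/8)*u^2 + (-7/16)) * h2 + ((-1/32)*s5 + (1/4)*s2r*u + (1/16)*u^2 + (17/32)) * hu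

lemma hXXinv : Xm * Xinv = 1 := by
  have h5 := h5; have h2 := h2; have hu := hu
  ext i j
  fin_cases i <;> fin_cases j
  · simp [Xm, Xinv, a, b, c, Matrix.mul_apply, Fin.sum_univ_two, Matrix.one_apply]
    linear_combination (1/16) * h5 + (1/4) * h2 + (-1/4) * hu
  · simp [Xm, Xinv, a, b, c, Matrix.mul_apply, Fin.sum_univ_two, Matrix.one_apply]
    ring
  · simp [Xm, Xinv, a, b, c, Matrix.mul_apply, Fin.sum_univ_two, Matrix.one_apply]
    ring
  · simp [Xm, Xinv, a, b, c, Matrix.mul_apply, Fin.sum_univ_two, Matrix.one_apply]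
    linear_combination (1/16) * h5 + (1/4) * h2 + (-1/4) * hu

lemma hXinvX : Xinv * Xm = 1 := by
  have h5 := h5; have h2 := h2; have hu := hu
  ext i j
  fin_cases i <;> fin_cases j
  · simp [Xm, Xinv, a, b, c, Matrix.mul_apply, Fin.sum_univ_two, Matrix.one_apply]
    linear_combination (1/16) * h5 + (1/4) * h2 + (-1/4) * hu
  · simp [Xm, Xinv, a, b, c, Matrix.mul_apply, Fin.sum_univ_two, Matrix.one_apply]
    ring
  · simp [Xm, Xinv, a, b, c, Matrix.mul_apply, Fin.sum_univ_two, Matrix.one_apply]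
    ring
  · simp [Xm, Xinv, a, b, c, Matrix.mul_apply, Fin.sum_univ_two, Matrix.one_apply]
    linear_combination (1/16) * h5 + (1/4) * h2 + (-1/4) * hu

lemma hYY : Ym * Ym = -1 := by
  ext i j
  fin_cases i <;> fin_cases j <;>
    simp [Ym, Matrix.mul_apply, Fin.sum_univ_two, Matrix.one_apply]

def Xu : U := ⟨Xm, Xinv, hXXinv, hXinvX⟩

def Yu : U := ⟨Ym, -Ym, by rw [mul_neg, hYY, neg_neg], by rw [neg_mul, hYY, neg_neg]⟩

lemma hXu5 : Xu ^ 5 = -1 := by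
  apply Units.ext
  rw [Units.val_pow_eq_pow_val, Units.val_neg, Units.val_one]
  show Xm ^ 5 = -1
  rw [show (5 : ℕ) = 4 + 1 by rfl, pow_succ, show (4 : ℕ) = 3 + 1 by rfl, pow_succ,
    show (3 : ℕ) = 2 + 1 by rfl, pow_succ, pow_two]
  exact hX5

lemma hYu2 : Yu ^ 2 = -1 := by
  apply Units.ext
  rw [Units.val_pow_eq_pow_val, Units.val_neg, Units.val_one]
  show Ym ^ 2 = -1
  rw [pow_two]; exact hYY

lemma hYXu4 : (Yu * Xu) ^ 4 = -1 := by
  apply Units.ext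
  rw [Units.val_pow_eq_pow_val, Units.val_neg, Units.val_one, Units.val_mul]
  show (Ym * Xm) ^ 4 = -1
  rw [show (4 : ℕ) = 3 + 1 by rfl, pow_succ, show (3 : ℕ) = 2 + 1 by rfl, pow_succ, pow_two]
  exact hZ4

def Zsub : Subgroup U := Subgroup.zpowers (-1 : U)

instance Zsub_normal : Zsub.Normal := by
  constructor
  intro x hx g
  obtain ⟨k, rfl⟩ := Subgroup.mem_zpowers_iff.mp hx
  have hc : Commute ((-1 : U) ^ k) g := ((Commute.neg_one_left g).zpow_left k)
  have : g * (-1 : U) ^ k * g⁻¹ = (-1 : U) ^ k := by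
    rw [← hc.eq, mul_assoc, mul_inv_cancel, mul_one]
  rw [this]
  exact Subgroup.zpow_mem_zpowers _ _

abbrev Q := U ⧸ Zsub

def π : U →* Q := QuotientGroup.mk' Zsub

def f : Bool → Q
  | true => π Xu
  | false => π Yu

lemma neg_one_mem : (-1 : U) ∈ Zsub := Subgroup.mem_zpowers _

lemma pi_neg_one : π (-1 : U) = 1 := (QuotientGroup.eq_one_iff _).mpr neg_one_mem

-- the relator set
def rels : Set (FreeGroup Bool) :=
  {FreeGroup.of true ^ 5, FreeGroup.of false ^ 2,
    (FreeGroup.of false * FreeGroup.of true) ^ 4}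

lemma hrels : ∀ r ∈ rels, FreeGroup.lift f r = 1 := by
  intro r hr
  rcases hr with h | h | h
  · subst h
    rw [map_pow, FreeGroup.lift_apply_of]
    show (π Xu) ^ 5 = 1
    rw [← map_pow, hXu5, pi_neg_one]
  · subst h
    rw [map_pow, FreeGroup.lift_apply_of]
    show (π Yu) ^ 2 = 1
    rw [← map_pow, hYu2, pi_neg_one]
  · rw [Set.mem_singleton_iff] at h
    subst h
    rw [map_pow, _root_.map_mul, FreeGroup.lift_apply_of, FreeGroup.lift_apply_of]
    show (π Yu * π Xu) ^ 4 = 1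
    rw [← _root_.map_mul, ← map_pow, hYXu4, pi_neg_one]

def φ : PresentedGroup rels →* Q := PresentedGroup.toGroup hrels

-- the hyperbolic witness
def Mm : Matrix (Fin 2) (Fin 2) ℝ := !![2*a*b, b*c - a^2; a^2 - b*c, 2*a*c]

lemma hW : Xm * Xm * Ym = Mm := by
  ext i j
  fin_cases i <;> fin_cases j <;>
    simp [Xm, Ym, Mm, Matrix.mul_apply, Fin.sum_univ_two] <;> ring

def lam : ℝ := s2r * (2*a + u) / 2

def v : Fin 2 → ℝ := ![b*c - a^2, lam - 2*a*b]

lemma hd : a^2 + b*c = 1 := by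
  have h5 := h5; have h2 := h2; have hu := hu
  simp only [a, b, c]
  linear_combination (1/16) * h5 + (1/4) * h2 + (-1/4) * hu

lemma hlam2 : lam^2 = 2*a*(b+c)*lam - 1 := by
  have h5 := h5; have h2 := h2; have hu := hu
  simp only [lam, a, b, c]
  ring_nf
  nlinarith [h5, h2, hu]

lemma hlam_gt : 1 < lam := by
  have h5 := h5; have h2 := h2; have hu := hu
  have hs5 := s5_gt; have hs2 := s2r_gt
  have hun := u_nonneg; have hsn := s2r_nonneg
  simp only [lam, a]
  nlinarith [mul_nonneg hsn hun]

lemma v0_neg : b*c - a^2 < 0 := by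
  have hd := hd
  have hs5 := s5_gt
  have : (3:ℝ)/4 < a := by simp only [a]; linarith
  nlinarith

lemma hMv : Mm.mulVec v = lam • v := by
  have hlam2 := hlam2
  have hd2 : (a^2 + b*c)^2 = 1 := by rw [hd]; norm_num
  ext i
  fin_cases i
  · simp [Mm, v, Matrix.mulVec, dotProduct, Fin.sum_univ_two]
    ring
  · simp [Mm, v, Matrix.mulVec, dotProduct, Fin.sum_univ_two]
    linear_combination (-1 : ℝ) * hd2 - hlam2

lemma hMn : ∀ n : ℕ, (Mm ^ n).mulVec v = lam ^ n • v := by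
  intro n
  induction n with
  | zero => simp [Matrix.one_mulVec]
  | succ n ih =>
      rw [pow_succ (M := Matrix (Fin 2) (Fin 2) ℝ), ← Matrix.mulVec_mulVec, hMv,
        Matrix.mulVec_smul, ih, smul_smul, mul_comm, ← pow_succ]

def g : PresentedGroup rels :=
  PresentedGroup.of true * PresentedGroup.of true * PresentedGroup.of false

def Mu : U := Xu * Xu * Yu

lemma hMuval : (Mu : Matrix (Fin 2) (Fin 2) ℝ) = Mm := by
  show Xm * Xm * Ym = Mm
  exact hW

lemma phi_g : φ g = π Mu := by
  show φ (PresentedGroup.of true * PresentedGroup.of true * PresentedGroup.of false)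
      = π (Xu * Xu * Yu)
  rw [_root_.map_mul, _root_.map_mul, _root_.map_mul π, _root_.map_mul π]
  simp only [φ, PresentedGroup.toGroup.of]
  rfl

lemma lam_pow_pos (n : ℕ) : 0 < lam ^ n := pow_pos (lt_trans one_pos hlam_gt) n

lemma key_inj : Function.Injective (fun n : ℕ => g ^ n) := by
  intro m n hmn
  have h1 : π (Mu ^ m) = π (Mu ^ n) := by
    have := congrArg φ hmn
    simpa only [map_pow, phi_g] using this
  have h2 : (Mu ^ m)⁻¹ * Mu ^ n ∈ Zsub := by
    rwa [← QuotientGroup.eq] 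
  obtain ⟨k, hk⟩ := Subgroup.mem_zpowers_iff.mp h2
  have hk' : Mu ^ m * (-1 : U) ^ k = Mu ^ n := by
    rw [hk, ← mul_assoc, mul_inv_cancel, one_mul]
  have hv0 := v0_neg
  have hlam := hlam_gt
  -- pass to matrices and apply to the eigenvector
  have hsq : ((-1 : U)) ^ (2 : ℤ) = 1 := by
    rw [show (2:ℤ) = 1 + 1 from rfl, _root_.zpow_add, zpow_one, neg_mul_neg, one_mul]
  rcases Int.even_or_odd k with he | ho
  · have : (-1 : U) ^ k = 1 := by
      obtain ⟨j, rfl⟩ := he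
      rw [← two_mul, _root_.zpow_mul, hsq, _root_.one_zpow]
    rw [this, mul_one] at hk'
    have hmm : (Mm ^ m) = (Mm ^ n) := by
      have := congrArg (Units.val) hk'
      rwa [Units.val_pow_eq_pow_val, Units.val_pow_eq_pow_val, hMuval] at this
    have := congrFun (show lam ^ m • v = lam ^ n • v by rw [← hMn m, ← hMn n, hmm]) 0
    simp only [Pi.smul_apply, v, Matrix.cons_val_zero, smul_eq_mul] at this
    have hlams : lam ^ m = lam ^ n := by
      have hv0' : b*c - a^2 ≠ 0 := ne_of_lt hv0
      exact mul_right_cancel₀ hv0' this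
    have hmono : StrictMono (fun n : ℕ => lam ^ n) := fun _ _ h => pow_lt_pow_right₀ hlam h
    exact hmono.injective hlams
  · have : (-1 : U) ^ k = -1 := by
      obtain ⟨j, rfl⟩ := ho
      rw [_root_.zpow_add, _root_.zpow_mul, hsq, _root_.one_zpow, zpow_one, one_mul]
    rw [this] at hk'
    have hmm : -(Mm ^ m) = (Mm ^ n) := by
      have := congrArg (Units.val) hk'
      rw [Units.val_mul, Units.val_pow_eq_pow_val, Units.val_pow_eq_pow_val, hMuval,
        Units.val_neg, Units.val_one, mul_neg, mul_one] at this
      exact this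
    exfalso
    have h3 : (-(Mm ^ m)).mulVec v = lam ^ n • v := by rw [hmm]; exact hMn n
    rw [Matrix.neg_mulVec, hMn m] at h3
    have := congrFun h3 0
    simp only [Pi.neg_apply, Pi.smul_apply, v, Matrix.cons_val_zero, smul_eq_mul] at this
    nlinarith [lam_pow_pos m, lam_pow_pos n, this]

end Stmt12Aux

theorem stmt_12 :
    Infinite (PresentedGroup
      ({FreeGroup.of true ^ 5, FreeGroup.of false ^ 2,
        (FreeGroup.of false * FreeGroup.of true) ^ 4} : Set (FreeGroup Bool))) := by
  exact Infinite.of_injective _ Stmt12Aux.key_inj
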